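/- For every natural number n and every real z with z > 2: ∫_{−2}^{2} (1/(z − t)) · Tₙ(t/2)/(π·√(4 − t²)) dt = (1/√(z² − 4)) · ((z − √(z² − 4))/2)^n. That is, the Cauchy transform of the n-th free eigenfunction 1_{[−2,2]}(t)·Tₙ(t/2)/(π√(4−t²)) dt equals G′(z)·G(z)^n up to sign, where G(z) = (z − √(z²−4))/2 is the Cauchy transform of the standard semicircle law. -/

import Mathlib

open Polynomial intervalIntegral

open Real Filter Set intervalIntegral MeasureTheory

lemma denom_pos {z : ℝ} (hz : 2 < z) (θ : ℝ) : 0 < z - 2 * Real.cos θ := by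
  nlinarith [Real.cos_le_one θ, Real.neg_one_le_cos θ]

lemma cont_inv {z : ℝ} (hz : 2 < z) : Continuous (fun θ : ℝ => 1 / (z - 2 * Real.cos θ)) := by
  exact continuous_const.div (by continuity) (fun θ => (denom_pos hz θ).ne')

lemma I0 {z : ℝ} (hz : 2 < z) :
    ∫ θ in (0:ℝ)..π, 1 / (z - 2 * Real.cos θ) = π / Real.sqrt (z ^ 2 - 4) := by
  have hD : 0 < z ^ 2 - 4 := by nlinarith
  set s := Real.sqrt (z ^ 2 - 4) with hsdef
  have hs : 0 < s := Real.sqrt_pos.2 hD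
  have hs2 : s ^ 2 = z ^ 2 - 4 := Real.sq_sqrt hD.le
  set c := (z + 2) / s with hcdef
  have hc : 0 < c := div_pos (by linarith) hs
  set F := fun θ : ℝ => (2 / s) * Real.arctan (c * Real.tan (θ / 2)) with hFdef
  -- derivative of F on [0, π)
  have hderiv : ∀ θ ∈ Set.Ico (0:ℝ) π, HasDerivAt F (1 / (z - 2 * Real.cos θ)) θ := by
    intro θ hθ
    have hhalf : θ / 2 ∈ Set.Ico (0:ℝ) (π / 2) := ⟨by linarith [hθ.1], by linarith [hθ.2]⟩
    have hu : 0 < Real.cos (θ / 2) := Real.cos_pos_of_mem_Ioo ⟨by linarith [hhalf.1, Real.pi_pos], hhalf.2⟩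
    have htan : HasDerivAt (fun x : ℝ => Real.tan (x / 2)) (1 / Real.cos (θ / 2) ^ 2 * (1 / 2)) θ := by
      have := (Real.hasDerivAt_tan hu.ne').comp θ ((hasDerivAt_id θ).div_const 2)
      simpa [Function.comp_def] using this
    have harctan := (Real.hasDerivAt_arctan (c * Real.tan (θ / 2))).comp θ (htan.const_mul c)
    have hF := harctan.const_mul (2 / s)
    refine hF.congr_deriv (Eq.symm ?_)
    have hu2 : Real.cos (θ / 2) ^ 2 = (1 + Real.cos θ) / 2 := by
      have := Real.cos_sq (θ / 2); rw [this]; ring_nf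
    have hv2 : Real.sin (θ / 2) ^ 2 = (1 - Real.cos θ) / 2 := by
      have := Real.sin_sq_add_cos_sq (θ / 2); nlinarith [hu2]
    have hden := denom_pos hz θ
    rw [Real.tan_eq_sin_div_cos]
    have h1 : 1 + (c * (Real.sin (θ / 2) / Real.cos (θ / 2))) ^ 2
        = (Real.cos (θ / 2) ^ 2 + c ^ 2 * Real.sin (θ / 2) ^ 2) / Real.cos (θ / 2) ^ 2 := by
      field_simp
    have hc2 : c ^ 2 = (z + 2) / (z - 2) := by
      rw [hcdef, div_pow, hs2]
      rw [div_eq_div_iff (by nlinarith) (by linarith)]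
      ring
    have h2 : Real.cos (θ / 2) ^ 2 + c ^ 2 * Real.sin (θ / 2) ^ 2 = (z - 2 * Real.cos θ) / (z - 2) := by
      have hz2 : z - 2 ≠ 0 := by linarith
      rw [hc2, hu2, hv2]; field_simp; ring
    rw [h1, h2]
    have hzs : s * s = (z + 2) * (z - 2) := by nlinarith [hs2]
    have hne : z - 2 * Real.cos θ ≠ 0 := hden.ne'
    have hz2 : z - 2 ≠ 0 := by linarith
    rw [hcdef]
    field_simp
    linear_combination hs2
  have hint : ∀ a b : ℝ, IntervalIntegrable (fun θ => 1 / (z - 2 * Real.cos θ)) MeasureTheory.volume a b :=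
    fun a b => (cont_inv hz).intervalIntegrable a b
  have heq : ∀ b ∈ Set.Ioo (0:ℝ) π, (∫ θ in (0:ℝ)..b, 1 / (z - 2 * Real.cos θ)) = F b - F 0 := by
    intro b hb
    apply intervalIntegral.integral_eq_sub_of_hasDerivAt
    · intro θ hθ
      rw [Set.uIcc_of_le hb.1.le] at hθ
      exact hderiv θ ⟨hθ.1, lt_of_le_of_lt hθ.2 hb.2⟩
    · exact hint 0 b
  have hF0 : F 0 = 0 := by simp [hFdef]
  have hlim1 : Filter.Tendsto (fun b => ∫ θ in (0:ℝ)..b, 1 / (z - 2 * Real.cos θ)) (nhdsWithin π (Set.Iio π))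
      (nhds (∫ θ in (0:ℝ)..π, 1 / (z - 2 * Real.cos θ))) :=
    ((intervalIntegral.continuous_primitive hint 0).tendsto π).mono_left nhdsWithin_le_nhds
  have htanlim : Filter.Tendsto (fun b : ℝ => Real.tan (b / 2)) (nhdsWithin π (Set.Iio π)) Filter.atTop := by
    apply Real.tendsto_tan_pi_div_two.comp
    rw [tendsto_nhdsWithin_iff]
    constructor
    · exact ((continuous_id.div_const 2).tendsto π).mono_left nhdsWithin_le_nhds
    · filter_upwards [self_mem_nhdsWithin] with b hb
      have : b < π := hb
      simpa using by linarith
  have harclim : Filter.Tendsto F (nhdsWithin π (Set.Iio π)) (nhds (π / s)) := by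
    have h1 : Filter.Tendsto (fun b : ℝ => c * Real.tan (b / 2)) (nhdsWithin π (Set.Iio π)) Filter.atTop :=
      htanlim.const_mul_atTop hc
    have h2 := (Real.tendsto_arctan_atTop.mono_right nhdsWithin_le_nhds).comp h1
    have h3 := h2.const_mul (2 / s)
    have hval : π / s = (2 / s) * (π / 2) := by field_simp
    rw [hval]
    simpa [hFdef, Function.comp] using h3
  have hmem : Set.Ioo (0:ℝ) π ∈ nhdsWithin π (Set.Iio π) :=
    Ioo_mem_nhdsLT_of_mem ⟨Real.pi_pos, le_refl π⟩
  have hlim2 : Filter.Tendsto (fun b => ∫ θ in (0:ℝ)..b, 1 / (z - 2 * Real.cos θ))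
      (nhdsWithin π (Set.Iio π)) (nhds (π / s)) := by
    apply harclim.congr'
    filter_upwards [hmem] with b hb
    rw [heq b hb, hF0, sub_zero]
  exact tendsto_nhds_unique hlim1 hlim2

lemma cos_int (k : ℕ) : (∫ θ in (0:ℝ)..π, Real.cos ((k + 1 : ℕ) * θ)) = 0 := by
  have hk : ((k:ℝ) + 1) ≠ 0 := by positivity
  push_cast
  rw [integral_comp_mul_left (fun x => Real.cos x) hk]
  have : ((k:ℝ) + 1) * π = ((k + 1 : ℕ) : ℝ) * π := by push_cast; ring
  rw [mul_zero, this, integral_cos, Real.sin_nat_mul_pi, Real.sin_zero, sub_zero, smul_zero]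

lemma cont_cos_inv {z : ℝ} (hz : 2 < z) (c : ℝ) :
    Continuous (fun θ : ℝ => Real.cos (c * θ) / (z - 2 * Real.cos θ)) :=
  (by continuity : Continuous fun θ : ℝ => Real.cos (c * θ)).div (by continuity)
    (fun θ => (denom_pos hz θ).ne')

lemma In_eq {z : ℝ} (hz : 2 < z) (n : ℕ) :
    ∫ θ in (0:ℝ)..π, Real.cos (n * θ) / (z - 2 * Real.cos θ)
      = π / Real.sqrt (z ^ 2 - 4) * ((z - Real.sqrt (z ^ 2 - 4)) / 2) ^ n := by
  have hD : 0 < z ^ 2 - 4 := by nlinarith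
  set s := Real.sqrt (z ^ 2 - 4) with hsdef
  have hs : 0 < s := Real.sqrt_pos.2 hD
  have hs2 : s ^ 2 = z ^ 2 - 4 := Real.sq_sqrt hD.le
  induction n using Nat.twoStepInduction with
  | zero => simpa using I0 hz
  | one =>
      have hptw : ∀ θ : ℝ, Real.cos ((1:ℕ) * θ) / (z - 2 * Real.cos θ)
          = (z / 2) * (1 / (z - 2 * Real.cos θ)) - 1 / 2 := by
        intro θ
        have hden := (denom_pos hz θ).ne'
        field_simp
        ring
      rw [intervalIntegral.integral_congr (fun θ _ => hptw θ)]
      rw [intervalIntegral.integral_sub (f := fun θ => z / 2 * (1 / (z - 2 * Real.cos θ)))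
        (g := fun _ => (1 / 2 : ℝ)) ((continuous_const.mul (cont_inv hz)).intervalIntegrable 0 π)
        (intervalIntegrable_const)]
      rw [intervalIntegral.integral_const_mul, I0 hz, intervalIntegral.integral_const]
      rw [← hsdef]
      field_simp
      ring
  | more n ih2 ih1 =>
      -- cos((n+2)θ) = z cos((n+1)θ)/den stuff
      have hptw : ∀ θ : ℝ, Real.cos ((n + 2 : ℕ) * θ) / (z - 2 * Real.cos θ)
          = z * (Real.cos ((n + 1 : ℕ) * θ) / (z - 2 * Real.cos θ))
            - Real.cos ((n + 1 : ℕ) * θ) - Real.cos (n * θ) / (z - 2 * Real.cos θ) := by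
        intro θ
        have hden := (denom_pos hz θ).ne'
        have h1 : ((n:ℝ) + 2) * θ = ((n:ℝ) + 1) * θ + θ := by ring
        have h2 : (n:ℝ) * θ = ((n:ℝ) + 1) * θ - θ := by ring
        push_cast
        rw [h1, h2, Real.cos_add, Real.cos_sub]
        linear_combination (-Real.cos (((n:ℝ) + 1) * θ)) * mul_inv_cancel₀ hden
      rw [intervalIntegral.integral_congr (fun θ _ => hptw θ)]
      have hi1 : IntervalIntegrable (fun θ => z * (Real.cos ((n + 1 : ℕ) * θ) / (z - 2 * Real.cos θ)))
          MeasureTheory.volume 0 π := (continuous_const.mul (cont_cos_inv hz _)).intervalIntegrable 0 π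
      have hi2 : IntervalIntegrable (fun θ : ℝ => Real.cos ((n + 1 : ℕ) * θ))
          MeasureTheory.volume 0 π := (by continuity : Continuous _).intervalIntegrable 0 π
      have hi3 : IntervalIntegrable (fun θ : ℝ => Real.cos ((n:ℕ) * θ) / (z - 2 * Real.cos θ))
          MeasureTheory.volume 0 π := (cont_cos_inv hz _).intervalIntegrable 0 π
      rw [intervalIntegral.integral_sub (hi1.sub hi2) hi3, intervalIntegral.integral_sub hi1 hi2,
        intervalIntegral.integral_const_mul, ih1, ih2, cos_int n]
      have hq : ((z - s) / 2) ^ 2 = z * ((z - s) / 2) - 1 := by nlinarith [hs2]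
      have : ((z - s) / 2) ^ (n + 2) = (z * ((z - s) / 2) - 1) * ((z - s) / 2) ^ n := by
        rw [← hq]; ring
      rw [this]
      ring

open MeasureTheory in
/-- The Cauchy transform of the `n`-th free eigenfunction. -/
theorem cauchy_transform_chebyshev_eigenfunction (n : ℕ) (z : ℝ) (hz : 2 < z) :
    ∫ t in (-2 : ℝ)..2,
        (1 / (z - t)) * (Polynomial.Chebyshev.T ℝ n).eval (t / 2) /
          (Real.pi * Real.sqrt (4 - t ^ 2)) =
      (1 / Real.sqrt (z ^ 2 - 4)) * ((z - Real.sqrt (z ^ 2 - 4)) / 2) ^ n := by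
  set g : ℝ → ℝ := fun t =>
    (1 / (z - t)) * (Polynomial.Chebyshev.T ℝ n).eval (t / 2) / (Real.pi * Real.sqrt (4 - t ^ 2))
    with hg
  have himg : (fun θ : ℝ => 2 * Real.cos θ) '' Set.Ioo 0 π = Set.Ioo (-2 : ℝ) 2 := by
    apply Set.Subset.antisymm
    · rintro x ⟨θ, hθ, rfl⟩
      have h1 : Real.cos θ < Real.cos 0 :=
        Real.strictAntiOn_cos (Set.mem_Icc.2 ⟨le_refl 0, Real.pi_pos.le⟩)
          (Set.mem_Icc.2 ⟨hθ.1.le, hθ.2.le⟩) hθ.1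
      have h2 : Real.cos π < Real.cos θ :=
        Real.strictAntiOn_cos (Set.mem_Icc.2 ⟨hθ.1.le, hθ.2.le⟩)
          (Set.mem_Icc.2 ⟨Real.pi_pos.le, le_refl π⟩) hθ.2
      rw [Real.cos_zero] at h1; rw [Real.cos_pi] at h2
      exact ⟨by dsimp only; linarith, by dsimp only; linarith⟩
    · rintro y hy
      obtain ⟨θ, hθ, hcos⟩ := Real.surjOn_cos (⟨by linarith [hy.1], by linarith [hy.2]⟩ :
        y / 2 ∈ Set.Icc (-1 : ℝ) 1)
      refine ⟨θ, ⟨?_, ?_⟩, by dsimp only; rw [hcos]; ring⟩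
      · rcases eq_or_lt_of_le hθ.1 with h | h
        · exfalso; rw [← h, Real.cos_zero] at hcos; linarith [hy.2]
        · exact h
      · rcases eq_or_lt_of_le hθ.2 with h | h
        · exfalso; rw [h, Real.cos_pi] at hcos; linarith [hy.1]
        · exact h
  have hderiv : ∀ θ ∈ Set.Ioo (0:ℝ) π,
      HasDerivWithinAt (fun θ : ℝ => 2 * Real.cos θ) (2 * -Real.sin θ) (Set.Ioo 0 π) θ :=
    fun θ _ => ((Real.hasDerivAt_cos θ).const_mul 2).hasDerivWithinAt
  have hinj : Set.InjOn (fun θ : ℝ => 2 * Real.cos θ) (Set.Ioo 0 π) := by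
    intro a ha b hb h
    exact Real.injOn_cos (Set.Ioo_subset_Icc_self ha) (Set.Ioo_subset_Icc_self hb)
      (by dsimp at h; linarith)
  have key := MeasureTheory.integral_image_eq_integral_abs_deriv_smul measurableSet_Ioo
    hderiv hinj g
  rw [himg] at key
  have hstep1 : (∫ t in (-2:ℝ)..2, g t) = ∫ t in Set.Ioo (-2:ℝ) 2, g t := by
    rw [intervalIntegral.integral_of_le (by norm_num : (-2:ℝ) ≤ 2),
      MeasureTheory.integral_Ioc_eq_integral_Ioo]
  have hcongr : ∀ θ ∈ Set.Ioo (0:ℝ) π,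
      |2 * -Real.sin θ| • g (2 * Real.cos θ) = Real.cos (n * θ) / (z - 2 * Real.cos θ) * (1 / π) := by
    intro θ hθ
    have hsin : 0 < Real.sin θ := Real.sin_pos_of_pos_of_lt_pi hθ.1 hθ.2
    have habs : |2 * -Real.sin θ| = 2 * Real.sin θ := by
      rw [abs_of_nonpos (by linarith)]; ring
    have hsqrt : Real.sqrt (4 - (2 * Real.cos θ) ^ 2) = 2 * Real.sin θ := by
      rw [show (4 : ℝ) - (2 * Real.cos θ) ^ 2 = (2 * Real.sin θ) ^ 2 by
        nlinarith [Real.sin_sq_add_cos_sq θ], Real.sqrt_sq (by positivity)]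
    have hT : (Polynomial.Chebyshev.T ℝ n).eval (2 * Real.cos θ / 2) = Real.cos (n * θ) := by
      rw [show 2 * Real.cos θ / 2 = Real.cos θ by ring]
      have := Polynomial.Chebyshev.T_real_cos θ (n : ℤ)
      push_cast at this ⊢
      exact this
    rw [hg]
    simp only [smul_eq_mul, habs, hsqrt, hT]
    have hden := (denom_pos hz θ).ne'
    have hpi := Real.pi_ne_zero
    field_simp
  rw [hstep1, key, MeasureTheory.setIntegral_congr_fun measurableSet_Ioo hcongr]
  have hstep2 : (∫ θ in Set.Ioo (0:ℝ) π, Real.cos (n * θ) / (z - 2 * Real.cos θ) * (1 / π))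
      = ∫ θ in (0:ℝ)..π, Real.cos (n * θ) / (z - 2 * Real.cos θ) * (1 / π) := by
    rw [intervalIntegral.integral_of_le Real.pi_pos.le, MeasureTheory.integral_Ioc_eq_integral_Ioo]
  rw [hstep2, intervalIntegral.integral_mul_const, In_eq hz n]
  have hs : 0 < Real.sqrt (z ^ 2 - 4) := Real.sqrt_pos.2 (by nlinarith)
  field_simp
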